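/- Let n ≥ 2, m ≥ 1, and let ℓ be any {0,1}-labeling of T^m_n. Let V_0 (resp. V_1) be the set of children of the root labeled 0 (resp. 1), and let X (resp. Y) be the labeled tree whose root is labeled 0 (resp. 1) and whose children are the 2|V_0| (resp. 2|V_1|) labeled subtrees rooted at the children of the vertices of V_0 (resp. V_1), with labeling inherited from ℓ. Then X is a labeled copy of T^{|V_0|}_{n−1}, Y is a labeled copy of T^{|V_1|}_{n−1}, and max over t ∈ {0,1}^{n+1} of occ(ℓ, t) in T^m_n equals max( max over t' ∈ {0,1}^n of occ(t') in X, max over t' ∈ {0,1}^n of occ(t') in Y ). -/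

import Mathlib

namespace TreeDB

/-- The sample space of `{0,1}`-labelings of the tree `T^m_n` (the rooted
tree whose root has `2m` children, each of which is the root of a full
binary tree of depth `n-1`): a labeling consists of the label of the root
together with, for each of the `2m` children, a labeling of the full binary
tree of depth `n-1` rooted at that child.  That binary tree has `2^n - 1`
vertices, stored in heap order: the vertex with heap index `h ∈ [1, 2^n - 1]`
(root `1`, children of `h` being `2h` and `2h+1`) is stored at position
`h - 1`. -/
abbrev Ω (m n : ℕ) : Type := Bool × (Fin (2 * m) → Fin (2 ^ n - 1) → Bool)

/-- The heap index of the vertex of a full binary tree reached from the root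
by the descent `p` (`false` = left, `true` = right). -/
def heapIdx (p : List Bool) : ℕ := p.foldl (fun h b => 2 * h + b.toNat) 1

/-- The label of the vertex with heap index `h` in a heap-stored labeled
full binary tree `g`. -/
def sub {N : ℕ} (g : Fin N → Bool) (h : ℕ) : Bool :=
  if hh : h - 1 < N then g ⟨h - 1, hh⟩ else false

/-- The sequence of the `n` labels read along the first `n` vertices of the
root-to-leaf path of the heap-stored labeled full binary tree `g`
determined by the descent `p`. -/
def pathLabels {N : ℕ} (n : ℕ) (g : Fin N → Bool) (p : List Bool) : List Bool :=
  (List.range n).map fun j => sub g (heapIdx (p.take j))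

/-- `occ ℓ t` is the number of root-to-leaf paths `w_0 w_1 … w_n` of `T^m_n`
with `ℓ(w_j) = t_j` for all `j`, for a labeling `ℓ` of `T^m_n` and a
sequence `t = t_0 t_1 … t_n ∈ {0,1}^{n+1}`.  A root-to-leaf path consists of
the root, a child `i` of the root, and a descent `p ∈ {0,1}^{n-1}` in the
full binary tree of depth `n-1` rooted at that child. -/
def occ {m n : ℕ} (ℓ : Ω m n) (t : List Bool) : ℕ :=
  match t with
  | [] => 0
  | t0 :: ts =>
      if ℓ.1 = t0 then
        ∑ i : Fin (2 * m), ∑ p : Fin (n - 1) → Bool,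
          if pathLabels n (ℓ.2 i) (List.ofFn p) = ts then 1 else 0
      else 0

/-- The random variable `M^m_n`: the maximum over `t ∈ {0,1}^{n+1}` of
`occ ℓ t`. -/
def Mval {m n : ℕ} (ℓ : Ω m n) : ℕ :=
  Finset.univ.sup fun t : Fin (n + 1) → Bool => occ ℓ (List.ofFn t)

/-- The probability of the event `P` under the uniform distribution over
`{0,1}`-labelings of `T^m_n`. -/
def Pr (m n : ℕ) (P : Ω m n → Prop) [DecidablePred P] : ℚ :=
  ((Finset.univ.filter P).card : ℚ) / (Fintype.card (Ω m n) : ℚ)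

/-- The expectation of `f` under the uniform distribution over
`{0,1}`-labelings of `T^m_n`. -/
def Exp (m n : ℕ) (f : Ω m n → ℕ) : ℚ :=
  (∑ ℓ : Ω m n, (f ℓ : ℚ)) / (Fintype.card (Ω m n) : ℚ)

/-- The labeled full binary tree of depth `n - 2` rooted at the left
(`s = false`) or right (`s = true`) child of the root of the heap-stored
labeled full binary tree `g` of depth `n - 1`. -/
def childSub {n : ℕ} (g : Fin (2 ^ n - 1) → Bool) (s : Bool) :
    Fin (2 ^ (n - 1) - 1) → Bool :=
  fun h => sub g ((h.val + 1) + (1 + s.toNat) * 2 ^ Nat.log2 (h.val + 1))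

end TreeDB

namespace TreeDB

set_option linter.dupNamespace false

lemma foldl_shift (h : ℕ) (q : List Bool) :
    q.foldl (fun h b => 2 * h + b.toNat) h
      = h * 2 ^ q.length + q.foldl (fun h b => 2 * h + b.toNat) 0 := by
  induction q generalizing h with
  | nil => simp
  | cons b q ih =>
    simp only [List.foldl_cons, List.length_cons]
    rw [ih (2 * h + b.toNat), ih (2 * 0 + b.toNat)]
    ring

lemma heapIdx_cons (b : Bool) (q : List Bool) :
    heapIdx (b :: q) = heapIdx q + (1 + b.toNat) * 2 ^ q.length := by
  unfold heapIdx
  rw [List.foldl_cons, foldl_shift, foldl_shift 1]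
  cases b <;> simp <;> ring

lemma heapIdx_bounds (q : List Bool) :
    2 ^ q.length ≤ heapIdx q ∧ heapIdx q < 2 ^ (q.length + 1) := by
  induction q with
  | nil => simp [heapIdx]
  | cons b q ih =>
    obtain ⟨h1, h2⟩ := ih
    rw [heapIdx_cons]
    simp only [List.length_cons, pow_succ]
    cases b <;> simp <;> omega

lemma log2_heapIdx (q : List Bool) : Nat.log2 (heapIdx q) = q.length := by
  obtain ⟨h1, h2⟩ := heapIdx_bounds q
  rw [Nat.log2_eq_log_two]
  exact Nat.log_eq_of_pow_le_of_lt_pow h1 h2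

lemma sub_childSub (k : ℕ) (g : Fin (2 ^ (k + 2) - 1) → Bool) (s : Bool) (q : List Bool)
    (hq : q.length ≤ k) :
    sub (childSub g s) (heapIdx q) = sub g (heapIdx (s :: q)) := by
  obtain ⟨h1, h2⟩ := heapIdx_bounds q
  have hpos : 1 ≤ heapIdx q := le_trans Nat.one_le_two_pow h1
  have hle : 2 ^ (q.length + 1) ≤ 2 ^ (k + 1) := Nat.pow_le_pow_right (by norm_num) (by omega)
  have hlt : heapIdx q - 1 < 2 ^ (k + 2 - 1) - 1 := by
    have : (2:ℕ) ^ (k+2-1) = 2 ^ (k+1) := by norm_num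
    omega
  have e1 : sub (childSub g s) (heapIdx q) = childSub g s ⟨heapIdx q - 1, hlt⟩ := by
    unfold sub; rw [dif_pos hlt]
  rw [e1]
  show sub g ((heapIdx q - 1 + 1) + (1 + s.toNat) * 2 ^ Nat.log2 (heapIdx q - 1 + 1)) = _
  have : heapIdx q - 1 + 1 = heapIdx q := by omega
  rw [this, log2_heapIdx, heapIdx_cons]

lemma pathLabels_cons (k : ℕ) (g : Fin (2 ^ (k + 2) - 1) → Bool) (s : Bool) (q : List Bool) :
    pathLabels (k + 2) g (s :: q) = sub g 1 :: pathLabels (k + 1) (childSub g s) q := by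
  unfold pathLabels
  rw [List.range_succ_eq_map, List.map_cons, List.map_map]
  congr 1
  refine List.map_congr_left ?_
  intro j hj
  simp only [Function.comp_apply, List.take_succ_cons]
  refine (sub_childSub k g s (q.take j) ?_).symm
  have := List.mem_range.mp hj
  simp only [List.length_take]
  omega


lemma sum_transfer {α ι κ : Type*} [Fintype κ] {s : Finset ι} {X2 : κ → α} {g : ι → α}
    (h : Finset.univ.val.map X2 = s.val.map g) (F : α → ℕ) :
    ∑ k, F (X2 k) = ∑ i ∈ s, F (g i) := by
  simp only [Finset.sum]
  rw [show (fun k => F (X2 k)) = F ∘ X2 from rfl, show (fun i => F (g i)) = F ∘ g from rfl,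
    ← Multiset.map_map, ← Multiset.map_map, h]

set_option maxHeartbeats 1000000 in
lemma occ_ofFn_succ {m k : ℕ} (ℓ : Ω m (k + 2)) (t : Fin (k + 2 + 1) → Bool) :
    occ ℓ (List.ofFn t) =
      if ℓ.1 = t 0 then
        ∑ i ∈ Finset.univ.filter (fun i : Fin (2 * m) => sub (ℓ.2 i) 1 = t 1),
          ∑ s : Bool, ∑ q : Fin k → Bool,
            (if pathLabels (k + 1) (childSub (ℓ.2 i) s) (List.ofFn q)
                = List.ofFn (fun j : Fin (k + 1) => t j.succ.succ) then 1 else 0)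
      else 0 := by
  rw [List.ofFn_succ]
  show (if ℓ.1 = t 0 then
      ∑ i : Fin (2 * m), ∑ p : Fin (k + 1) → Bool,
        if pathLabels (k + 2) (ℓ.2 i) (List.ofFn p) = List.ofFn (fun j => t j.succ) then 1 else 0
    else 0) = _
  congr 1
  have key : ∀ (i : Fin (2 * m)) (p : Fin (k + 1) → Bool),
      (pathLabels (k + 2) (ℓ.2 i) (List.ofFn p) = List.ofFn (fun j => t j.succ)) ↔
      (sub (ℓ.2 i) 1 = t 1 ∧
        pathLabels (k + 1) (childSub (ℓ.2 i) (p 0)) (List.ofFn (fun j : Fin k => p j.succ))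
          = List.ofFn (fun j : Fin (k + 1) => t j.succ.succ)) := by
    intro i p
    rw [List.ofFn_succ (f := p), pathLabels_cons, List.ofFn_succ (f := fun j => t j.succ)]
    simp [Fin.succ_zero_eq_one]
  calc ∑ i : Fin (2 * m), ∑ p : Fin (k + 1) → Bool,
        (if pathLabels (k + 2) (ℓ.2 i) (List.ofFn p) = List.ofFn (fun j => t j.succ)
          then 1 else 0)
      = ∑ i : Fin (2 * m), ∑ s : Bool, ∑ q : Fin k → Bool,
        (if (sub (ℓ.2 i) 1 = t 1 ∧
            pathLabels (k + 1) (childSub (ℓ.2 i) s) (List.ofFn q)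
              = List.ofFn (fun j : Fin (k + 1) => t j.succ.succ)) then 1 else 0) := by
        refine Finset.sum_congr rfl fun i _ => ?_
        have h1 : (∑ p : Fin (k + 1) → Bool,
            if pathLabels (k + 2) (ℓ.2 i) (List.ofFn p) = List.ofFn (fun j => t j.succ)
              then 1 else 0)
            = ∑ x : Bool × (Fin k → Bool),
              (if (sub (ℓ.2 i) 1 = t 1 ∧
                pathLabels (k + 1) (childSub (ℓ.2 i) x.1) (List.ofFn x.2)
                  = List.ofFn (fun j : Fin (k + 1) => t j.succ.succ)) then 1 else 0) := by
          refine Fintype.sum_equiv (Fin.consEquiv fun _ : Fin (k + 1) => Bool).symm _ _ fun p => ?_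
          simp only [key i p, Fin.consEquiv_symm_apply]
          rfl
        rw [h1]
        exact Fintype.sum_prod_type _
    _ = _ := by
        rw [Finset.sum_filter]
        refine Finset.sum_congr rfl fun i _ => ?_
        by_cases h : sub (ℓ.2 i) 1 = t 1 <;> simp [h]

lemma occ_ofFn {c k : ℕ} (X : Ω c (k + 1)) (t' : Fin (k + 1 + 1) → Bool) :
    occ X (List.ofFn t') =
      if X.1 = t' 0 then
        ∑ i : Fin (2 * c), ∑ q : Fin k → Bool,
          (if pathLabels (k + 1) (X.2 i) (List.ofFn q)
              = List.ofFn (fun j : Fin (k + 1) => t' j.succ) then 1 else 0)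
      else 0 := by
  rw [List.ofFn_succ]
  rfl

lemma exists_enum {α β : Type*} (s : Finset α) (F : α × Bool → β) :
    ∃ f : Fin (2 * s.card) → β,
      Finset.univ.val.map f = (s ×ˢ (Finset.univ : Finset Bool)).val.map F := by
  have hc : 2 * s.card = (s ×ˢ (Finset.univ : Finset Bool)).card := by
    rw [Finset.card_product, Finset.card_univ, Fintype.card_bool, mul_comm]
  let e : Fin (2 * s.card) ≃ {x // x ∈ s ×ˢ (Finset.univ : Finset Bool)} :=
    (finCongr hc).trans (s ×ˢ (Finset.univ : Finset Bool)).equivFin.symm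
  refine ⟨fun j => F (e j), ?_⟩
  calc Finset.univ.val.map (fun j => F (e j))
      = ((Finset.univ.map e.toEmbedding).val.map Subtype.val).map F := by
        rw [Finset.map_val, Multiset.map_map, Multiset.map_map]; rfl
    _ = _ := by
        rw [Finset.map_univ_equiv, Finset.univ_eq_attach, Finset.attach_val,
          Multiset.attach_map_val]

set_option maxHeartbeats 4000000

/-- let `n ≥ 2`, `m ≥ 1`, and let `ℓ` be a `{0,1}`-labeling of
`T^m_n`.  Let `V_0` (resp. `V_1`) be the set of children of the root labeled
`0` (resp. `1`).  Then there is a labeled copy `X` of `T^{|V_0|}_{n-1}`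
whose root is labeled `0` and whose `2|V_0|` subtrees are exactly (as a
multiset) the labeled subtrees rooted at the children of the vertices of
`V_0`, a labeled copy `Y` of `T^{|V_1|}_{n-1}` whose root is labeled `1` and
whose `2|V_1|` subtrees are exactly the labeled subtrees rooted at the
children of the vertices of `V_1`, and
`max_{t ∈ {0,1}^{n+1}} occ(ℓ, t) = max (max_{t' ∈ {0,1}^n} occ(X, t'),
max_{t' ∈ {0,1}^n} occ(Y, t'))`. -/
theorem mval_eq_max_subtrees (m n : ℕ) (hn : 2 ≤ n) (hm : 1 ≤ m) (ℓ : Ω m n) :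
    ∃ (X : Ω ((Finset.univ.filter fun i : Fin (2 * m) =>
          sub (ℓ.2 i) 1 = false).card) (n - 1))
      (Y : Ω ((Finset.univ.filter fun i : Fin (2 * m) =>
          sub (ℓ.2 i) 1 = true).card) (n - 1)),
      X.1 = false ∧ Y.1 = true ∧
      (Finset.univ.val.map X.2 =
        ((Finset.univ.filter fun i : Fin (2 * m) => sub (ℓ.2 i) 1 = false) ×ˢ
            (Finset.univ : Finset Bool)).val.map
          fun is => childSub (ℓ.2 is.1) is.2) ∧
      (Finset.univ.val.map Y.2 =
        ((Finset.univ.filter fun i : Fin (2 * m) => sub (ℓ.2 i) 1 = true) ×ˢ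
            (Finset.univ : Finset Bool)).val.map
          fun is => childSub (ℓ.2 is.1) is.2) ∧
      Mval ℓ = max (Mval X) (Mval Y) := by
  obtain ⟨k, rfl⟩ : ∃ k, n = k + 2 := ⟨n - 2, by omega⟩
  clear hn hm
  obtain ⟨f0, hf0⟩ := exists_enum
    (Finset.univ.filter fun i : Fin (2 * m) => sub (ℓ.2 i) 1 = false)
    (fun is => childSub (ℓ.2 is.1) is.2)
  obtain ⟨f1, hf1⟩ := exists_enum
    (Finset.univ.filter fun i : Fin (2 * m) => sub (ℓ.2 i) 1 = true)
    (fun is => childSub (ℓ.2 is.1) is.2)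
  refine ⟨(false, f0), (true, f1), rfl, rfl, hf0, hf1, ?_⟩
  -- the common inner quantity
  let G : Bool → (Fin (k + 1) → Bool) → ℕ := fun b tail =>
    ∑ i ∈ Finset.univ.filter (fun i : Fin (2 * m) => sub (ℓ.2 i) 1 = b),
      ∑ s : Bool, ∑ q : Fin k → Bool,
        (if pathLabels (k + 1) (childSub (ℓ.2 i) s) (List.ofFn q)
            = List.ofFn tail then 1 else 0)
  have hL : ∀ t : Fin (k + 2 + 1) → Bool,
      occ ℓ (List.ofFn t) =
        if ℓ.1 = t 0 then G (t 1) (fun j => t j.succ.succ) else 0 :=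
    fun t => occ_ofFn_succ ℓ t
  have hX : ∀ b (f : Fin (2 * (Finset.univ.filter fun i : Fin (2 * m) =>
        sub (ℓ.2 i) 1 = b).card) → Fin (2 ^ (k + 1) - 1) → Bool),
      (Finset.univ.val.map f =
        ((Finset.univ.filter fun i : Fin (2 * m) => sub (ℓ.2 i) 1 = b) ×ˢ
            (Finset.univ : Finset Bool)).val.map
          fun is => childSub (ℓ.2 is.1) is.2) →
      ∀ t' : Fin (k + 1 + 1) → Bool,
      occ ((b, f) : Ω _ (k + 1)) (List.ofFn t') =
        if b = t' 0 then G b (fun j => t' j.succ) else 0 := by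
    intro b f hf t'
    rw [occ_ofFn]
    show (if b = t' 0 then _ else 0) = _
    congr 1
    calc ∑ i, (fun g => ∑ q : Fin k → Bool,
          (if pathLabels (k + 1) g (List.ofFn q)
              = List.ofFn (fun j : Fin (k + 1) => t' j.succ) then 1 else 0)) (f i)
        = ∑ is ∈ (Finset.univ.filter fun i : Fin (2 * m) => sub (ℓ.2 i) 1 = b) ×ˢ
              (Finset.univ : Finset Bool),
            ∑ q : Fin k → Bool,
              (if pathLabels (k + 1) (childSub (ℓ.2 is.1) is.2) (List.ofFn q)
                  = List.ofFn (fun j : Fin (k + 1) => t' j.succ) then 1 else 0) :=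
          sum_transfer hf (fun g => ∑ q : Fin k → Bool,
            (if pathLabels (k + 1) g (List.ofFn q)
                = List.ofFn (fun j : Fin (k + 1) => t' j.succ) then 1 else 0))
      _ = G b (fun j => t' j.succ) := Finset.sum_product _ _ _
  have hX0 := hX false f0 hf0
  have hX1 := hX true f1 hf1
  apply le_antisymm
  · apply Finset.sup_le
    intro t _
    rw [hL t]
    split_ifs with h
    · rcases h1 : t 1 with _ | _
      · calc G false (fun j => t j.succ.succ)
            = occ ((false, f0) : Ω _ (k + 1))
                (List.ofFn (Fin.cons false (fun j => t j.succ.succ))) := by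
              rw [hX0]
              simp [Fin.cons_zero, Fin.cons_succ]
          _ ≤ Mval ((false, f0) : Ω _ (k + 1)) :=
            Finset.le_sup (f := fun u : Fin (k + 1 + 1) → Bool =>
              occ ((false, f0) : Ω _ (k + 1)) (List.ofFn u)) (Finset.mem_univ _)
          _ ≤ _ := le_max_left _ _
      · calc G true (fun j => t j.succ.succ)
            = occ ((true, f1) : Ω _ (k + 1))
                (List.ofFn (Fin.cons true (fun j => t j.succ.succ))) := by
              rw [hX1]
              simp [Fin.cons_zero, Fin.cons_succ]
          _ ≤ Mval ((true, f1) : Ω _ (k + 1)) :=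
            Finset.le_sup (f := fun u : Fin (k + 1 + 1) → Bool =>
              occ ((true, f1) : Ω _ (k + 1)) (List.ofFn u)) (Finset.mem_univ _)
          _ ≤ _ := le_max_right _ _
    · exact Nat.zero_le _
  · have hone : (1 : Fin (k + 2 + 1)) = (0 : Fin (k + 2)).succ := Fin.succ_zero_eq_one.symm
    apply max_le
    · apply Finset.sup_le
      intro t' _
      rw [hX0 t']
      split_ifs with h
      · calc G false (fun j => t' j.succ)
            = occ ℓ (List.ofFn (Fin.cons ℓ.1 t')) := by
              rw [hL, if_pos (by rw [Fin.cons_zero]), hone, Fin.cons_succ, ← h]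
              congr 1
          _ ≤ Mval ℓ := Finset.le_sup (f := fun u : Fin (k + 2 + 1) → Bool =>
            occ ℓ (List.ofFn u)) (Finset.mem_univ _)
      · exact Nat.zero_le _
    · apply Finset.sup_le
      intro t' _
      rw [hX1 t']
      split_ifs with h
      · calc G true (fun j => t' j.succ)
            = occ ℓ (List.ofFn (Fin.cons ℓ.1 t')) := by
              rw [hL, if_pos (by rw [Fin.cons_zero]), hone, Fin.cons_succ, ← h]
              congr 1
          _ ≤ Mval ℓ := Finset.le_sup (f := fun u : Fin (k + 2 + 1) → Bool =>
            occ ℓ (List.ofFn u)) (Finset.mem_univ _)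
      · exact Nat.zero_le _

end TreeDB
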